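/- Let N be a natural number, let β : Fin N → ℝ satisfy β k > 0 for all k, and let n : Fin N → ℕ be a multi-index. Then (∏_{k} √(β k/(2π))) · ∫_{ℝ^N} (∏_{k} (x k)^{n k}) · exp(−(1/2)·Σ_{k} β k · (x k)²) dx equals the mixed partial derivative of order n k in each variable y k of the function y ↦ exp(Σ_{k} (y k)²/(2·β k)), evaluated at y = 0. -/

import Mathlib

open MeasureTheory Real
open scoped ContDiff

/-- The partial derivative of `f : (Fin N → ℝ) → ℝ` in the `k`-th coordinate direction. -/
noncomputable def partialDeriv' {N : ℕ} (k : Fin N) (f : (Fin N → ℝ) → ℝ) :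
    (Fin N → ℝ) → ℝ :=
  fun y => fderiv ℝ f y (Pi.single k 1)

/-- The mixed partial derivative of multi-order `n`: apply `∂/∂y k` exactly `n k` times
for each `k` (in a fixed order, running through `Fin N`). -/
noncomputable def mixedPartialDeriv {N : ℕ} (n : Fin N → ℕ) (f : (Fin N → ℝ) → ℝ) :
    (Fin N → ℝ) → ℝ :=
  (List.finRange N).foldr (fun k g => (partialDeriv' k)^[n k] g) f

/-- Moment coefficients: c 0 = 1, c 1 = 0, c (n+2) = (n+1)/b * c n. -/
noncomputable def momC (b : ℝ) : ℕ → ℝ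
  | 0 => 1
  | 1 => 0
  | (n+2) => (n+1) / b * momC b n

lemma integrable_pow_mul_gauss {b : ℝ} (hb : 0 < b) (n : ℕ) :
    Integrable fun x : ℝ => x ^ n * Real.exp (-b * x ^ 2) := by
  have h := integrable_rpow_mul_exp_neg_mul_sq hb (s := (n : ℝ))
    (by have : (0:ℝ) ≤ n := Nat.cast_nonneg n; linarith)
  simpa [Real.rpow_natCast] using h

lemma gauss_moment_rec {b : ℝ} (hb : 0 < b) (n : ℕ) :
    (∫ x : ℝ, x ^ (n + 2) * Real.exp (-(b/2) * x ^ 2))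
      = (n + 1) / b * ∫ x : ℝ, x ^ n * Real.exp (-(b/2) * x ^ 2) := by
  have hb2 : 0 < b / 2 := by linarith
  have hu : ∀ x : ℝ, HasDerivAt (fun x : ℝ => x ^ (n+1)) (((n:ℝ)+1) * x ^ n) x := by
    intro x
    simpa using hasDerivAt_pow (n+1) x
  have hv : ∀ x : ℝ, HasDerivAt (fun x : ℝ => Real.exp (-(b/2) * x ^ 2))
      (-b * x * Real.exp (-(b/2) * x ^ 2)) x := by
    intro x
    have h1 : HasDerivAt (fun x : ℝ => -(b/2) * x ^ 2) (-b * x) x := by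
      have := (hasDerivAt_pow 2 x).const_mul (-(b/2))
      refine this.congr_deriv ?_
      norm_num
      ring
    have := h1.exp
    convert this using 1
    ring
  have I1 : Integrable ((fun x : ℝ => x ^ (n+1)) *
      fun x : ℝ => -b * x * Real.exp (-(b/2) * x ^ 2)) := by
    have := (integrable_pow_mul_gauss hb2 (n+2)).const_mul (-b)
    apply this.congr
    filter_upwards with x
    simp only [Pi.mul_apply]
    ring
  have I2 : Integrable ((fun x : ℝ => ((n:ℝ)+1) * x ^ n) *
      fun x : ℝ => Real.exp (-(b/2) * x ^ 2)) := by
    have := (integrable_pow_mul_gauss hb2 n).const_mul ((n:ℝ)+1)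
    apply this.congr
    filter_upwards with x
    simp only [Pi.mul_apply]
    ring
  have I3 : Integrable ((fun x : ℝ => x ^ (n+1)) *
      fun x : ℝ => Real.exp (-(b/2) * x ^ 2)) := by
    have := integrable_pow_mul_gauss hb2 (n+1)
    apply this.congr
    filter_upwards with x
    simp [Pi.mul_apply]
  have key := integral_mul_deriv_eq_deriv_mul_of_integrable (fun x _ => hu x) (fun x _ => hv x) I1 I2 I3
  have e1 : (∫ x : ℝ, x ^ (n+1) * (-b * x * Real.exp (-(b/2) * x ^ 2)))
      = -b * ∫ x : ℝ, x ^ (n+2) * Real.exp (-(b/2) * x ^ 2) := by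
    rw [← integral_const_mul]
    congr 1
    funext x
    ring
  have e2 : (∫ x : ℝ, ((n:ℝ)+1) * x ^ n * Real.exp (-(b/2) * x ^ 2))
      = ((n:ℝ)+1) * ∫ x : ℝ, x ^ n * Real.exp (-(b/2) * x ^ 2) := by
    rw [← integral_const_mul]
    congr 1
    funext x
    ring
  rw [e1, e2] at key
  have hbne : b ≠ 0 := ne_of_gt hb
  field_simp at key ⊢
  linarith

lemma gauss_moment_zero {b : ℝ} (hb : 0 < b) :
    Real.sqrt (b / (2 * π)) * ∫ x : ℝ, x ^ 0 * Real.exp (-(b/2) * x ^ 2) = 1 := by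
  simp only [pow_zero, one_mul]
  rw [integral_gaussian (b/2)]
  rw [← Real.sqrt_mul (by positivity)]
  rw [show b / (2 * π) * (π / (b/2)) = 1 by
    field_simp]
  exact Real.sqrt_one

lemma gauss_moment_one {b : ℝ} (hb : 0 < b) :
    (∫ x : ℝ, x ^ 1 * Real.exp (-(b/2) * x ^ 2)) = 0 := by
  have h := integral_neg_eq_self (fun x : ℝ => x ^ 1 * Real.exp (-(b/2) * x ^ 2)) volume
  have e : (fun x : ℝ => (-x) ^ 1 * Real.exp (-(b/2) * (-x) ^ 2))
      = fun x : ℝ => -(x ^ 1 * Real.exp (-(b/2) * x ^ 2)) := by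
    funext x
    rw [neg_sq]
    ring
  rw [e, integral_neg] at h
  linarith

lemma gauss_moment_eq_momC {b : ℝ} (hb : 0 < b) : ∀ n : ℕ,
    Real.sqrt (b / (2 * π)) * ∫ x : ℝ, x ^ n * Real.exp (-(b/2) * x ^ 2) = momC b n
  | 0 => gauss_moment_zero hb
  | 1 => by rw [gauss_moment_one hb, momC, mul_zero]
  | (n+2) => by
      rw [gauss_moment_rec hb n, momC, ← gauss_moment_eq_momC hb n]
      push_cast
      ring

section DerivSide

lemma iter_deriv_add {f g : ℝ → ℝ} (n : ℕ) (hf : ContDiff ℝ ∞ f) (hg : ContDiff ℝ ∞ g) :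
    deriv^[n] (fun t => f t + g t) = fun t => deriv^[n] f t + deriv^[n] g t := by
  induction n generalizing f g with
  | zero => rfl
  | succ n ih =>
    rw [Function.iterate_succ_apply, Function.iterate_succ_apply,
      Function.iterate_succ_apply (f := deriv) (n := n) (x := g)]
    have e : deriv (fun t => f t + g t) = fun t => deriv f t + deriv g t := by
      funext t
      exact deriv_add ((contDiff_infty_iff_deriv.mp hf).1 t) ((contDiff_infty_iff_deriv.mp hg).1 t)
    rw [e]
    exact ih (contDiff_infty_iff_deriv.mp hf).2 (contDiff_infty_iff_deriv.mp hg).2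

lemma iter_deriv_const_mul (c : ℝ) {f : ℝ → ℝ} (n : ℕ) (hf : ContDiff ℝ ∞ f) :
    deriv^[n] (fun t => c * f t) = fun t => c * deriv^[n] f t := by
  induction n generalizing f with
  | zero => rfl
  | succ n ih =>
    rw [Function.iterate_succ_apply, Function.iterate_succ_apply (f := deriv) (n := n) (x := f)]
    have e : deriv (fun t => c * f t) = fun t => c * deriv f t := by
      funext t
      exact deriv_const_mul c ((contDiff_infty_iff_deriv.mp hf).1 t)
    rw [e]
    exact ih (contDiff_infty_iff_deriv.mp hf).2

lemma contDiff_mul_id {f : ℝ → ℝ} (hf : ContDiff ℝ ∞ f) :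
    ContDiff ℝ ∞ (fun t : ℝ => t * f t) := contDiff_id.mul hf

lemma iter_deriv_leibniz (n : ℕ) {f : ℝ → ℝ} (hf : ContDiff ℝ ∞ f) :
    deriv^[n+1] (fun t => t * f t)
      = fun t => t * deriv^[n+1] f t + ((n:ℝ)+1) * deriv^[n] f t := by
  induction n generalizing f with
  | zero =>
    funext t
    have h : HasDerivAt (fun t : ℝ => t * f t) (1 * f t + t * deriv f t) t :=
      (hasDerivAt_id t).mul ((contDiff_infty_iff_deriv.mp hf).1 t).hasDerivAt
    simp only [zero_add, Function.iterate_one, Function.iterate_zero, id_eq, Nat.cast_zero]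
    rw [h.deriv]
    ring
  | succ n ih =>
    rw [Function.iterate_succ_apply]
    have hd : deriv (fun t => t * f t) = fun t => t * deriv f t + 1 * f t := by
      funext t
      have h : HasDerivAt (fun t : ℝ => t * f t) (1 * f t + t * deriv f t) t :=
        (hasDerivAt_id t).mul ((contDiff_infty_iff_deriv.mp hf).1 t).hasDerivAt
      rw [h.deriv]
      ring
    rw [hd]
    have hf' : ContDiff ℝ ∞ (deriv f) := (contDiff_infty_iff_deriv.mp hf).2
    rw [iter_deriv_add (n+1) (contDiff_mul_id hf') (contDiff_const.mul hf)]
    rw [ih hf', iter_deriv_const_mul 1 (n+1) hf]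
    funext t
    rw [← Function.iterate_succ_apply (f := deriv) (n := n+1) (x := f),
      ← Function.iterate_succ_apply (f := deriv) (n := n) (x := f)]
    push_cast
    ring

end DerivSide

/-- The 1D generating function. -/
noncomputable def gg (b : ℝ) : ℝ → ℝ := fun t => Real.exp (t ^ 2 / (2 * b))

lemma gg_contDiff (b : ℝ) : ContDiff ℝ ∞ (gg b) :=
  (Real.contDiff_exp.of_le le_top).comp ((contDiff_id.pow 2).div_const (2 * b))

lemma gg_deriv {b : ℝ} (hb : 0 < b) :
    deriv (gg b) = fun t => (1 / b) * (t * gg b t) := by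
  funext t
  have h1 : HasDerivAt (fun t : ℝ => t ^ 2 / (2 * b)) (t / b) t := by
    have := (hasDerivAt_pow 2 t).div_const (2 * b)
    refine this.congr_deriv ?_
    norm_num
    field_simp
  have h2 := h1.exp
  rw [show gg b = fun t : ℝ => Real.exp (t ^ 2 / (2 * b)) from rfl, h2.deriv]
  field_simp

lemma iter_deriv_gg_at_zero {b : ℝ} (hb : 0 < b) : ∀ n : ℕ, deriv^[n] (gg b) 0 = momC b n
  | 0 => by simp [gg, momC]
  | 1 => by
      simp only [Function.iterate_one, gg_deriv hb, momC]
      norm_num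
  | (n+2) => by
      rw [show n + 2 = (n + 1) + 1 by ring, Function.iterate_succ_apply, gg_deriv hb,
        iter_deriv_const_mul (1/b) (n+1) (contDiff_mul_id (gg_contDiff b)),
        iter_deriv_leibniz n (gg_contDiff b)]
      simp only [zero_mul, zero_add]
      rw [iter_deriv_gg_at_zero hb n, momC]
      push_cast
      ring

lemma partialDeriv_prod {N : ℕ} (G : Fin N → ℝ → ℝ) (hG : ∀ j, ContDiff ℝ ∞ (G j)) (k : Fin N) :
    partialDeriv' k (fun y => ∏ j, G j (y j))
      = fun y => ∏ j, Function.update G k (deriv (G k)) j (y j) := by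
  funext y
  have hj : ∀ j ∈ Finset.univ, HasFDerivAt (fun y : Fin N → ℝ => G j (y j))
      ((deriv (G j) (y j)) • (ContinuousLinearMap.proj j : (Fin N → ℝ) →L[ℝ] ℝ)) y := by
    intro j _
    exact ((contDiff_infty_iff_deriv.mp (hG j)).1 (y j)).hasDerivAt.comp_hasFDerivAt y
      (hasFDerivAt_apply j y)
  have H := HasFDerivAt.finset_prod hj
  have hfd : partialDeriv' k (fun y => ∏ j, G j (y j)) y
      = (∑ i, (∏ j ∈ Finset.univ.erase i, G j (y j)) •
          ((deriv (G i) (y i)) • (ContinuousLinearMap.proj i : (Fin N → ℝ) →L[ℝ] ℝ)))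
        (Pi.single k 1) := by
    unfold partialDeriv'
    rw [H.fderiv]
  rw [hfd]
  rw [ContinuousLinearMap.sum_apply]
  rw [Finset.sum_eq_single k]
  · simp only [ContinuousLinearMap.smul_apply, ContinuousLinearMap.proj_apply,
      Pi.single_eq_same, smul_eq_mul, mul_one]
    have e : (fun j => Function.update G k (deriv (G k)) j (y j))
        = Function.update (fun j => G j (y j)) k (deriv (G k) (y k)) := by
      funext j
      by_cases hjk : j = k
      · subst hjk; simp
      · simp [Function.update_of_ne hjk]
    rw [e, Finset.prod_update_of_mem (Finset.mem_univ k), Finset.sdiff_singleton_eq_erase]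
    ring
  · intro i _ hik
    simp [Pi.single_eq_of_ne' (Ne.symm hik)]
  · intro h
    exact absurd (Finset.mem_univ k) h

lemma partialDeriv_iter_prod {N : ℕ} (m : ℕ) (G : Fin N → ℝ → ℝ)
    (hG : ∀ j, ContDiff ℝ ∞ (G j)) (k : Fin N) :
    (partialDeriv' k)^[m] (fun y => ∏ j, G j (y j))
      = fun y => ∏ j, Function.update G k (deriv^[m] (G k)) j (y j) := by
  induction m generalizing G with
  | zero => simp [Function.update_eq_self]
  | succ m ih =>
    rw [Function.iterate_succ_apply, partialDeriv_prod G hG k]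
    have e : (fun y : Fin N → ℝ => ∏ j, Function.update G k (deriv (G k)) j (y j))
        = fun y => ∏ j, (Function.update G k (deriv (G k))) j (y j) := rfl
    rw [e, ih (Function.update G k (deriv (G k)))
      (fun j => by
        by_cases hjk : j = k
        · rw [hjk, Function.update_self]
          exact (contDiff_infty_iff_deriv.mp (hG k)).2
        · rw [Function.update_of_ne hjk]; exact hG j)]
    funext y
    congr 1
    funext j
    by_cases hjk : j = k
    · subst hjk
      simp only [Function.update_idem, Function.update_self]
      rw [← Function.iterate_succ_apply (f := deriv)]
    · simp [Function.update_of_ne hjk]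

lemma foldr_partialDeriv_prod {N : ℕ} (n : Fin N → ℕ) :
    ∀ (l : List (Fin N)), l.Nodup → ∀ (G : Fin N → ℝ → ℝ), (∀ j, ContDiff ℝ ∞ (G j)) →
    l.foldr (fun k g => (partialDeriv' k)^[n k] g) (fun y => ∏ j, G j (y j))
      = fun y => ∏ j, (if j ∈ l then deriv^[n j] (G j) else G j) (y j) := by
  intro l
  induction l with
  | nil => intro _ G _; simp
  | cons k l ih =>
    intro hnd G hG
    have hk : k ∉ l := (List.nodup_cons.mp hnd).1
    rw [List.foldr_cons, ih (List.nodup_cons.mp hnd).2 G hG]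
    have e : (fun y : Fin N → ℝ => ∏ j, (if j ∈ l then deriv^[n j] (G j) else G j) (y j))
        = fun y => ∏ j, (fun j => if j ∈ l then deriv^[n j] (G j) else G j) j (y j) := rfl
    rw [e, partialDeriv_iter_prod (n k) _
      (fun j => by
        by_cases hjl : j ∈ l
        · simp only [hjl, if_true]
          exact ContDiff.iterate_deriv _ (hG j)
        · simp only [hjl, if_false]
          exact hG j) k]
    funext y
    congr 1
    funext j
    by_cases hjk : j = k
    · subst hjk
      rw [Function.update_self]
      simp [hk, List.mem_cons]
    · rw [Function.update_of_ne hjk]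
      simp [List.mem_cons, hjk]

lemma mixedPartialDeriv_prod {N : ℕ} (n : Fin N → ℕ) (G : Fin N → ℝ → ℝ)
    (hG : ∀ j, ContDiff ℝ ∞ (G j)) :
    mixedPartialDeriv n (fun y => ∏ j, G j (y j))
      = fun y => ∏ j, deriv^[n j] (G j) (y j) := by
  unfold mixedPartialDeriv
  rw [foldr_partialDeriv_prod n (List.finRange N) (List.nodup_finRange N) G hG]
  simp [List.mem_finRange]

/-- The Gaussian integral of a monomial equals the mixed partial derivative of the
generating exponential `exp (∑ k, (y k)^2 / (2 β k))` at `y = 0`. -/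
theorem gaussian_moment_eq_mixedPartialDeriv (N : ℕ) (β : Fin N → ℝ)
    (hβ : ∀ k, 0 < β k) (n : Fin N → ℕ) :
    (∏ k, Real.sqrt (β k / (2 * π))) *
      ∫ x : Fin N → ℝ, (∏ k, (x k) ^ (n k)) * Real.exp (-(1 / 2) * ∑ k, β k * (x k) ^ 2) =
    mixedPartialDeriv n (fun y => Real.exp (∑ k, (y k) ^ 2 / (2 * β k))) 0 := by
  have hgfun : (fun y : Fin N → ℝ => Real.exp (∑ k, (y k) ^ 2 / (2 * β k)))
      = fun y => ∏ k, gg (β k) (y k) := by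
    funext y
    rw [Real.exp_sum]
    rfl
  rw [hgfun, mixedPartialDeriv_prod n _ (fun j => gg_contDiff (β j))]
  simp only
  have hrhs : (∏ k, deriv^[n k] (gg (β k)) ((0 : Fin N → ℝ) k)) = ∏ k, momC (β k) (n k) :=
    Finset.prod_congr rfl fun k _ => by
      simp only [Pi.zero_apply]
      exact iter_deriv_gg_at_zero (hβ k) (n k)
  rw [show (∏ j, deriv^[n j] (gg (β j)) ((0 : Fin N → ℝ) j)) = ∏ k, momC (β k) (n k) from hrhs]
  have hint : (fun x : Fin N → ℝ =>
        (∏ k, (x k) ^ (n k)) * Real.exp (-(1 / 2) * ∑ k, β k * (x k) ^ 2))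
      = fun x => ∏ k, (x k ^ n k * Real.exp (-(β k / 2) * (x k) ^ 2)) := by
    funext x
    rw [Finset.prod_mul_distrib]
    congr 1
    rw [← Real.exp_sum]
    congr 1
    rw [Finset.mul_sum]
    exact Finset.sum_congr rfl fun k _ => by ring
  rw [hint,
    integral_fintype_prod_volume_eq_prod (ι := Fin N)
      (fun k (t : ℝ) => t ^ n k * Real.exp (-(β k / 2) * t ^ 2)),
    ← Finset.prod_mul_distrib]
  exact Finset.prod_congr rfl fun k _ => gauss_moment_eq_momC (hβ k) (n k)
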